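/- arXiv:1704.06974 — 5 statements merged into one kernel-verified Lean document; each statement's English description precedes it below -/
import Mathlib

section
/- Let N, m, n be positive integers, let P be a symmetric real N×N matrix and b a real N×m matrix. Let V be a real N×(mn) matrix with orthonormal columns (Vᵀ V = I_{mn}) whose column span equals the column span of the block Krylov matrix [b, P b, P² b, …, P^{n−1} b]. Define the reduced order propagator P̃ = Vᵀ P V ∈ ℝ^{mn×mn} and the reduced order transducer matrix B̃ = Vᵀ b ∈ ℝ^{mn×m}. Then the interpolation conditions bᵀ T_k(P) b = B̃ᵀ T_k(P̃) B̃ hold for every integer k with 0 ≤ k ≤ 2n−1. -/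
open Matrix Polynomial

lemma chebDeg (k : ℕ) : (Polynomial.Chebyshev.T ℝ k).natDegree ≤ k := by
  induction k using Nat.twoStepInduction with
  | zero => simp [Polynomial.Chebyshev.T_zero]
  | one => simp [Polynomial.Chebyshev.T_one]
  | more k ih1 ih2 =>
    have : ((k:ℤ) + 2) = ((k + 2 : ℕ) : ℤ) := by push_cast; ring
    rw [← this, Polynomial.Chebyshev.T_add_two]
    refine le_trans (natDegree_sub_le _ _) ?_
    have h1 : (2 * X * Polynomial.Chebyshev.T ℝ ((k:ℤ)+1)).natDegree ≤ k + 2 := by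
      refine le_trans (natDegree_mul_le) ?_
      have : ((k:ℤ) + 1) = ((k + 1 : ℕ) : ℤ) := by push_cast; ring
      rw [this]
      have h2 : (2 * X : ℝ[X]).natDegree ≤ 1 := le_trans natDegree_mul_le (by simp)
      omega
    have h3 : (Polynomial.Chebyshev.T ℝ (k:ℤ)).natDegree ≤ k + 2 := by omega
    omega

/-- Evaluation of the Chebyshev polynomial of the first kind at a square matrix. -/
noncomputable def chebMat {I : Type*} [Fintype I] [DecidableEq I]
    (P : Matrix I I ℝ) (k : ℤ) : Matrix I I ℝ :=
  Polynomial.aeval P (Polynomial.Chebyshev.T ℝ k)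

/-- The column span of a matrix: the submodule spanned by its columns. -/
def colSpan {I J : Type*} (M : Matrix I J ℝ) : Submodule ℝ (I → ℝ) :=
  Submodule.span ℝ (Set.range fun j => fun i => M i j)

theorem stmt0 (N m n : ℕ) (hN : 0 < N) (hm : 0 < m) (hn : 0 < n)
    (P : Matrix (Fin N) (Fin N) ℝ) (hP : P.IsSymm)
    (b : Matrix (Fin N) (Fin m) ℝ)
    (V : Matrix (Fin N) (Fin n × Fin m) ℝ)
    (hV : Vᵀ * V = 1)
    (hspan : colSpan V =
      colSpan (Matrix.of fun i (p : Fin n × Fin m) => (P ^ (p.1 : ℕ) * b) i p.2)) :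
    ∀ k : ℕ, k ≤ 2 * n - 1 →
      bᵀ * chebMat P k * b =
        (Vᵀ * b)ᵀ * chebMat (Vᵀ * P * V) k * (Vᵀ * b) := by
  have hproj : ∀ x ∈ colSpan V, (V * Vᵀ) *ᵥ x = x := by
    intro x hx
    have hx' : x ∈ LinearMap.range V.mulVecLin := by
      rw [Matrix.range_mulVecLin]; exact hx
    obtain ⟨y, rfl⟩ := hx'
    show (V * Vᵀ) *ᵥ (V *ᵥ y) = V *ᵥ y
    rw [Matrix.mulVec_mulVec, Matrix.mul_assoc, hV, Matrix.mul_one]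
  have hcol : ∀ j : ℕ, j < n → (V * Vᵀ) * (P ^ j * b) = P ^ j * b := by
    intro j hj
    ext i c
    have hmem : (fun i => (P ^ j * b) i c) ∈ colSpan V := by
      rw [hspan]
      exact Submodule.subset_span ⟨(⟨j, hj⟩, c), rfl⟩
    exact congrFun (hproj _ hmem) i
  have hkry : ∀ j : ℕ, j < n →
      V * (Vᵀ * P * V) ^ j * (Vᵀ * b) = P ^ j * b := by
    intro j
    induction j with
    | zero =>
      intro hj
      have h0 := hcol 0 hn
      simp only [pow_zero, Matrix.mul_one, Matrix.one_mul] at h0 ⊢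
      rw [← Matrix.mul_assoc]; exact h0
    | succ j ih =>
      intro hj
      have ih' := ih (by omega)
      have e1 : V * (Vᵀ * P * V) ^ (j+1) * (Vᵀ * b)
          = (V * Vᵀ) * (P * (V * (Vᵀ * P * V) ^ j * (Vᵀ * b))) := by
        rw [pow_succ']
        simp only [Matrix.mul_assoc]
      rw [e1, ih', ← Matrix.mul_assoc P, ← pow_succ']
      exact hcol (j+1) hj
  have hmom : ∀ d : ℕ, d ≤ 2 * n - 1 →
      bᵀ * P ^ d * b = (Vᵀ * b)ᵀ * (Vᵀ * P * V) ^ d * (Vᵀ * b) := by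
    intro d hd
    obtain ⟨i, ε, j, hi, hj, hε, rfl⟩ :
        ∃ i ε j, i < n ∧ j < n ∧ ε ≤ 1 ∧ d = i + ε + j :=
      ⟨min d (n-1), min (d - min d (n-1)) 1,
       d - min d (n-1) - min (d - min d (n-1)) 1,
       by omega, by omega, by omega, by omega⟩
    have hQsym : (Vᵀ * P * V)ᵀ = Vᵀ * P * V := by
      simp [Matrix.transpose_mul, Matrix.mul_assoc, hP.eq]
    have hPε : Vᵀ * P ^ ε * V = (Vᵀ * P * V) ^ ε := by
      interval_cases ε
      · simpa using hV
      · simp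
    have hL : bᵀ * P ^ (i + ε + j) * b
        = (P ^ i * b)ᵀ * P ^ ε * (P ^ j * b) := by
      rw [show P ^ (i + ε + j) = P ^ i * P ^ ε * P ^ j from by rw [pow_add, pow_add],
        Matrix.transpose_mul, Matrix.transpose_pow, hP.eq]
      simp only [Matrix.mul_assoc]
    rw [hL, ← hkry i hi, ← hkry j hj]
    have hQi : ((Vᵀ * P * V) ^ i)ᵀ = (Vᵀ * P * V) ^ i := by
      rw [Matrix.transpose_pow, hQsym]
    have hQi' : ((Vᵀ * (P * V)) ^ i)ᵀ = (Vᵀ * (P * V)) ^ i := by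
      rw [← Matrix.mul_assoc]; exact hQi
    calc (V * (Vᵀ * P * V) ^ i * (Vᵀ * b))ᵀ * P ^ ε * (V * (Vᵀ * P * V) ^ j * (Vᵀ * b))
        = (Vᵀ * b)ᵀ * ((Vᵀ * P * V) ^ i * ((Vᵀ * (P ^ ε * V)) * ((Vᵀ * P * V) ^ j * (Vᵀ * b)))) := by
          simp only [Matrix.transpose_mul, Matrix.mul_assoc, Matrix.transpose_transpose, hQi']
      _ = (Vᵀ * b)ᵀ * (Vᵀ * P * V) ^ (i + ε + j) * (Vᵀ * b) := by
          rw [show Vᵀ * (P ^ ε * V) = (Vᵀ * P * V) ^ ε from by rw [← hPε, Matrix.mul_assoc],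
            pow_add, pow_add]
          simp only [Matrix.mul_assoc]
  intro k hk
  have hdeg : (Polynomial.Chebyshev.T ℝ k).natDegree < 2 * n := by
    have := chebDeg k; omega
  simp only [chebMat, Polynomial.aeval_eq_sum_range' hdeg]
  simp only [Matrix.mul_sum, Matrix.sum_mul, Matrix.mul_smul, Matrix.smul_mul]
  refine Finset.sum_congr rfl fun i hi => ?_
  rw [hmom i (by simp only [Finset.mem_range] at hi; omega)]
end

section
/- Let N, m, n be positive integers, let P be a symmetric real N×N matrix and b a real N×m matrix. Let V be a real N×(mn) matrix with orthonormal columns (Vᵀ V = I_{mn}) whose column span equals the column span of the block Krylov matrix [b, P b, P² b, …, P^{n−1} b]. Define P̃ = Vᵀ P V and B̃ = Vᵀ b. Then for every integer k with 0 ≤ k ≤ n−1 the snapshots are exactly reproduced by the reduced model: V · T_k(P̃) · B̃ = T_k(P) · b. -/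
open Matrix Polynomial

lemma chebT_natDegree_le : ∀ k : ℕ, (Polynomial.Chebyshev.T ℝ (k : ℤ)).natDegree ≤ k := by
  intro k
  induction k using Nat.twoStepInduction with
  | zero => simp [Polynomial.Chebyshev.T_zero]
  | one => simp [Polynomial.Chebyshev.T_one]
  | more k ih1 ih2 =>
    push_cast
    rw [Polynomial.Chebyshev.T_add_two]
    refine le_trans (Polynomial.natDegree_sub_le _ _) (max_le ?_ (le_trans ih1 (by omega)))
    refine le_trans Polynomial.natDegree_mul_le ?_
    have h1 : ((2 : ℝ[X]) * X).natDegree ≤ 1 :=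
      le_trans Polynomial.natDegree_mul_le (by simp)
    have h2 : (Polynomial.Chebyshev.T ℝ ((k : ℤ) + 1)).natDegree ≤ k + 1 := by
      have := ih2; push_cast at this; exact this
    omega

lemma chebMat_rec {I : Type*} [Fintype I] [DecidableEq I] (A : Matrix I I ℝ) (k : ℤ) :
    chebMat A (k + 2) = (2 : ℝ) • (A * chebMat A (k + 1)) - chebMat A k := by
  have h : (2 : ℝ[X]) * X * Polynomial.Chebyshev.T ℝ (k + 1)
      = (2 : ℝ) • (X * Polynomial.Chebyshev.T ℝ (k + 1)) := by
    rw [Polynomial.smul_eq_C_mul, show Polynomial.C (2 : ℝ) = 2 from map_ofNat _ 2, ← mul_assoc]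
  rw [chebMat, chebMat, chebMat, Polynomial.Chebyshev.T_add_two, h, map_sub,
    _root_.map_smul, _root_.map_mul, Polynomial.aeval_X]

theorem stmt1 (N m n : ℕ) (hN : 0 < N) (hm : 0 < m) (hn : 0 < n)
    (P : Matrix (Fin N) (Fin N) ℝ) (hP : P.IsSymm)
    (b : Matrix (Fin N) (Fin m) ℝ)
    (V : Matrix (Fin N) (Fin n × Fin m) ℝ)
    (hV : Vᵀ * V = 1)
    (hspan : colSpan V =
      colSpan (Matrix.of fun i (p : Fin n × Fin m) => (P ^ (p.1 : ℕ) * b) i p.2)) :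
    ∀ k : ℕ, k ≤ n - 1 →
      V * chebMat (Vᵀ * P * V) k * (Vᵀ * b) = chebMat P k * b := by
  -- entrywise identity relating matrix product and mulVec of a column
  have key : ∀ (A : Matrix (Fin N) (Fin N) ℝ) (M : Matrix (Fin N) (Fin m) ℝ)
      (i : Fin N) (j : Fin m), (A * M) i j = (A *ᵥ fun r => M r j) i := by
    intro A M i j
    simp [Matrix.mul_apply, Matrix.mulVec, dotProduct]
  -- V Vᵀ fixes every vector in colSpan V
  have hfix : ∀ x ∈ colSpan V, (V * Vᵀ) *ᵥ x = x := by
    intro x hx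
    induction hx using Submodule.span_induction with
    | mem x hx =>
      obtain ⟨j, rfl⟩ := hx
      show (V * Vᵀ) *ᵥ (fun i => V i j) = fun i => V i j
      have hcol : (fun i => V i j) = V *ᵥ Pi.single j 1 := by
        ext i
        simp [Matrix.mulVec_single]
      rw [hcol, Matrix.mulVec_mulVec, Matrix.mul_assoc, hV, Matrix.mul_one]
    | zero => simp
    | add x y _ _ hx hy => simp [Matrix.mulVec_add, hx, hy]
    | smul c x _ hx => simp [Matrix.mulVec_smul, hx]
  -- columns of q(P) b lie in colSpan V for deg q ≤ n-1
  have hcolmem : ∀ q : ℝ[X], q.natDegree ≤ n - 1 → ∀ j : Fin m,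
      (fun i => ((Polynomial.aeval P q : Matrix (Fin N) (Fin N) ℝ) * b) i j) ∈ colSpan V := by
    intro q hq j
    rw [hspan]
    have hq' : q.natDegree < n := by omega
    rw [Polynomial.aeval_eq_sum_range' hq']
    have hsum : (fun i => ((∑ t ∈ Finset.range n, q.coeff t • P ^ t) * b) i j)
        = ∑ t ∈ Finset.range n, q.coeff t • (fun i => (P ^ t * b) i j) := by
      ext i
      simp only [Matrix.mul_apply, Matrix.sum_apply, Matrix.smul_apply, Finset.sum_apply,
        Pi.smul_apply, smul_eq_mul, Finset.sum_mul, Finset.mul_sum, mul_assoc]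
      exact Finset.sum_comm
    rw [hsum]
    refine Submodule.sum_mem _ fun t ht => Submodule.smul_mem _ _ ?_
    apply Submodule.subset_span
    exact ⟨(⟨t, Finset.mem_range.mp ht⟩, j), rfl⟩
  -- V Vᵀ fixes q(P) b for deg q ≤ n-1
  have hMfix : ∀ q : ℝ[X], q.natDegree ≤ n - 1 →
      V * Vᵀ * ((Polynomial.aeval P q : Matrix (Fin N) (Fin N) ℝ) * b)
        = (Polynomial.aeval P q : Matrix (Fin N) (Fin N) ℝ) * b := by
    intro q hq
    ext i j
    rw [key]
    exact congrFun (hfix _ (hcolmem q hq j)) i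
  have hb : V * (Vᵀ * b) = b := by
    have := hMfix 1 (by simp)
    rw [_root_.map_one, Matrix.one_mul, Matrix.mul_assoc] at this
    exact this
  intro k
  induction k using Nat.twoStepInduction with
  | zero =>
    intro _
    simp only [Nat.cast_zero, chebMat, Polynomial.Chebyshev.T_zero, _root_.map_one,
      Matrix.mul_one, Matrix.one_mul]
    exact hb
  | one =>
    intro hk
    have hPb : V * (Vᵀ * (P * b)) = P * b := by
      have := hMfix X (by simpa using hk)
      rw [Polynomial.aeval_X, Matrix.mul_assoc] at this
      exact this
    simp only [Nat.cast_one, chebMat, Polynomial.Chebyshev.T_one, Polynomial.aeval_X]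
    calc V * (Vᵀ * P * V) * (Vᵀ * b) = V * (Vᵀ * (P * (V * (Vᵀ * b)))) := by
          simp only [Matrix.mul_assoc]
      _ = P * b := by rw [hb, hPb]
  | more k ih1 ih2 =>
    intro hk
    have hk1 : k + 1 ≤ n - 1 := by omega
    have hk0 : k ≤ n - 1 := by omega
    have e1 := ih1 hk0
    have e2 := ih2 hk1
    have hcast : ((k + 2 : ℕ) : ℤ) = (k : ℤ) + 2 := by push_cast; ring
    have hcast1 : ((k + 1 : ℕ) : ℤ) = (k : ℤ) + 1 := by push_cast; ring
    rw [hcast1] at e2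
    rw [hcast, chebMat_rec, chebMat_rec]
    -- the degree-(k+2) polynomial X * T_{k+1}
    have hdeg : (X * Polynomial.Chebyshev.T ℝ ((k : ℤ) + 1)).natDegree ≤ n - 1 := by
      refine le_trans Polynomial.natDegree_mul_le ?_
      have h2 : (Polynomial.Chebyshev.T ℝ ((k : ℤ) + 1)).natDegree ≤ k + 1 := by
        have := chebT_natDegree_le (k + 1); push_cast at this; exact this
      have := Polynomial.natDegree_X_le (R := ℝ)
      omega
    have hPfix : V * (Vᵀ * (P * (chebMat P ((k : ℤ) + 1) * b)))
        = P * (chebMat P ((k : ℤ) + 1) * b) := by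
      have := hMfix _ hdeg
      rw [_root_.map_mul, Polynomial.aeval_X] at this
      simp only [chebMat, Matrix.mul_assoc] at this ⊢
      exact this
    have hA : V * (Vᵀ * P * V * chebMat (Vᵀ * P * V) ((k : ℤ) + 1)) * (Vᵀ * b)
        = P * chebMat P ((k : ℤ) + 1) * b := by
      calc V * (Vᵀ * P * V * chebMat (Vᵀ * P * V) ((k : ℤ) + 1)) * (Vᵀ * b)
          = V * (Vᵀ * (P * (V * chebMat (Vᵀ * P * V) ((k : ℤ) + 1) * (Vᵀ * b)))) := by
            simp only [Matrix.mul_assoc]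
        _ = V * (Vᵀ * (P * (chebMat P ((k : ℤ) + 1) * b))) := by rw [e2]
        _ = P * (chebMat P ((k : ℤ) + 1) * b) := hPfix
        _ = P * chebMat P ((k : ℤ) + 1) * b := by rw [Matrix.mul_assoc]
    rw [Matrix.mul_sub, Matrix.sub_mul, Matrix.mul_smul, Matrix.smul_mul, hA, e1,
      Matrix.sub_mul, Matrix.smul_mul]
end

section
/- Let N, m, n be positive integers, let P be a symmetric real N×N matrix and b a real N×m matrix. Let U be the N×(mn) snapshot matrix whose k-th block column (k = 0,…,n−1) is T_k(P) b. Suppose U = V Lᵀ, where V is N×(mn) with orthonormal columns (Vᵀ V = I_{mn}) and L ∈ ℝ^{mn×mn} is invertible and block lower triangular with respect to the m×m block structure (its (k,l) block L_{k,l} is the zero m×m matrix whenever l > k). Then the reduced order transducer matrix B̃ = Vᵀ b ∈ ℝ^{mn×m} has all block rows zero except the first: its k-th m×m block B̃_k is the zero matrix for every k with 1 ≤ k ≤ n−1. -/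
open Matrix Polynomial

theorem stmt3 (N m n : ℕ) (hN : 0 < N) (hm : 0 < m) (hn : 0 < n)
    (P : Matrix (Fin N) (Fin N) ℝ) (hP : P.IsSymm)
    (b : Matrix (Fin N) (Fin m) ℝ)
    (U V : Matrix (Fin N) (Fin n × Fin m) ℝ)
    (hU : U = Matrix.of fun i (p : Fin n × Fin m) => (chebMat P (p.1 : ℕ) * b) i p.2)
    (L : Matrix (Fin n × Fin m) (Fin n × Fin m) ℝ)
    (hQR : U = V * Lᵀ)
    (hV : Vᵀ * V = 1)
    (hLinv : IsUnit L)
    (hLtri : ∀ k l : Fin n, (k : ℕ) < l → ∀ i j : Fin m, L (k, i) (l, j) = 0) :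
    ∀ k : Fin n, 1 ≤ (k : ℕ) → ∀ i j : Fin m, (Vᵀ * b) (k, i) j = 0 := by
  intro k hk i j
  set z : Fin n := ⟨0, hn⟩
  have hb : ∀ x j, b x j = U x (z, j) := by
    intro x j
    have : ((z : ℕ) : ℤ) = 0 := by simp [z]
    simp [hU, chebMat, this, Polynomial.Chebyshev.T_zero]
  have hVU : Vᵀ * U = Lᵀ := by
    rw [hQR, ← Matrix.mul_assoc, hV, Matrix.one_mul]
  have : (Vᵀ * b) (k, i) j = (Vᵀ * U) (k, i) (z, j) := by
    simp only [Matrix.mul_apply]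
    exact Finset.sum_congr rfl fun x _ => by rw [hb]
  rw [this, hVU, Matrix.transpose_apply]
  exact hLtri z k (by show 0 < (k : ℕ); omega) j i
end

section
/- Let P be a symmetric real N×N matrix and b a real N×m matrix. For all integers k, l ≥ 0, the inner products of the snapshots are expressed by the data via (T_k(P) b)ᵀ (T_l(P) b) = (1/2) · ( bᵀ T_{k+l}(P) b + bᵀ T_{|k−l|}(P) b ). -/
open Matrix Polynomial

lemma chebMat_transpose {I : Type*} [Fintype I] [DecidableEq I]
    (P : Matrix I I ℝ) (hP : P.IsSymm) (k : ℤ) : (chebMat P k)ᵀ = chebMat P k := by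
  unfold chebMat
  rw [aeval_eq_sum_range]
  rw [Matrix.transpose_sum]
  congr 1; ext i
  rw [Matrix.transpose_smul, Matrix.transpose_pow, hP]

theorem stmt4 (N m : ℕ) (P : Matrix (Fin N) (Fin N) ℝ) (hP : P.IsSymm)
    (b : Matrix (Fin N) (Fin m) ℝ) (k l : ℕ) :
    (chebMat P k * b)ᵀ * (chebMat P l * b) =
      (1 / 2 : ℝ) • (bᵀ * chebMat P (k + l) * b + bᵀ * chebMat P |(k : ℤ) - l| * b) := by
  have habs : chebMat P |(k : ℤ) - l| = chebMat P ((k : ℤ) - l) := by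
    rcases abs_choice ((k : ℤ) - l) with h | h
    · rw [h]
    · rw [h]; unfold chebMat; rw [Polynomial.Chebyshev.T_neg]
  have hmul : (2 : ℝ) • (chebMat P k * chebMat P l)
      = chebMat P ((k : ℤ) + l) + chebMat P ((k : ℤ) - l) := by
    have := Polynomial.Chebyshev.T_mul_T ℝ (k : ℤ) (l : ℤ)
    have h2 := congrArg (Polynomial.aeval P) this
    simpa [chebMat, _root_.map_mul, _root_.map_add, map_ofNat, two_smul, two_mul, add_mul] using h2
  rw [habs, Matrix.transpose_mul, chebMat_transpose P hP]
  have : bᵀ * chebMat P k * (chebMat P l * b)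
      = bᵀ * (chebMat P k * chebMat P l) * b := by
    simp [Matrix.mul_assoc]
  rw [this]
  have key : chebMat P k * chebMat P l
      = (1 / 2 : ℝ) • (chebMat P ((k : ℤ) + l) + chebMat P ((k : ℤ) - l)) := by
    rw [← hmul, smul_smul]; norm_num
  rw [key]
  simp [Matrix.mul_smul, Matrix.smul_mul, Matrix.mul_add, Matrix.add_mul, Matrix.mul_assoc]
end

section
/- Let P be a symmetric real N×N matrix and b a real N×m matrix. For all integers k, l ≥ 0, (T_k(P) b)ᵀ · P · (T_l(P) b) = (1/4) · ( bᵀ T_{k+l+1}(P) b + bᵀ T_{|k−l+1|}(P) b + bᵀ T_{|k+l−1|}(P) b + bᵀ T_{|k−l−1|}(P) b ). -/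
open Matrix Polynomial

lemma transpose_aeval {I : Type*} [Fintype I] [DecidableEq I]
    (P : Matrix I I ℝ) (p : ℝ[X]) : (Polynomial.aeval P p)ᵀ = Polynomial.aeval Pᵀ p := by
  induction p using Polynomial.induction_on' with
  | add p q hp hq => simp [hp, hq]
  | monomial n a => simp [Polynomial.aeval_monomial, Matrix.transpose_mul,
      Matrix.transpose_pow, Algebra.algebraMap_eq_smul_one, Matrix.smul_mul, Matrix.mul_smul]

lemma chebMat_abs {I : Type*} [Fintype I] [DecidableEq I]
    (P : Matrix I I ℝ) (z : ℤ) : chebMat P |z| = chebMat P z := by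
  rcases abs_choice z with h | h
  · rw [chebMat, chebMat, h]
  · rw [chebMat, chebMat, h, Polynomial.Chebyshev.T_neg]

lemma cheb_key (k l : ℤ) : Polynomial.C (4 : ℝ) * (Polynomial.Chebyshev.T ℝ k
      * Polynomial.Chebyshev.T ℝ 1 * Polynomial.Chebyshev.T ℝ l) =
    Polynomial.Chebyshev.T ℝ (k + l + 1) + Polynomial.Chebyshev.T ℝ (k - l + 1)
      + Polynomial.Chebyshev.T ℝ (k + l - 1) + Polynomial.Chebyshev.T ℝ (k - l - 1) := by
  have h1 := Polynomial.Chebyshev.T_mul_T ℝ k l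
  have h2 := Polynomial.Chebyshev.T_mul_T ℝ (k + l) 1
  have h3 := Polynomial.Chebyshev.T_mul_T ℝ (k - l) 1
  have hC : Polynomial.C (4 : ℝ) = (4 : ℝ[X]) := map_ofNat _ 4
  rw [hC]
  linear_combination 2 * Polynomial.Chebyshev.T ℝ 1 * h1 + h2 + h3

theorem stmt5 (N m : ℕ) (P : Matrix (Fin N) (Fin N) ℝ) (hP : P.IsSymm)
    (b : Matrix (Fin N) (Fin m) ℝ) (k l : ℕ) :
    (chebMat P k * b)ᵀ * P * (chebMat P l * b) =
      (1 / 4 : ℝ) • (bᵀ * chebMat P (k + l + 1) * b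
        + bᵀ * chebMat P |(k : ℤ) - l + 1| * b
        + bᵀ * chebMat P |(k : ℤ) + l - 1| * b
        + bᵀ * chebMat P |(k : ℤ) - l - 1| * b) := by
  have hT : (chebMat P k)ᵀ = chebMat P k := by
    rw [chebMat, transpose_aeval, hP.eq]
  have hP1 : P = chebMat P 1 := by simp [chebMat, Polynomial.Chebyshev.T_one]
  have key : (4 : ℝ) • (chebMat P k * P * chebMat P l) =
      chebMat P ((k : ℤ) + l + 1) + chebMat P ((k : ℤ) - l + 1)
        + chebMat P ((k : ℤ) + l - 1) + chebMat P ((k : ℤ) - l - 1) := by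
    have h := congrArg (Polynomial.aeval P) (cheb_key (k : ℤ) (l : ℤ))
    rw [_root_.map_mul, Polynomial.aeval_C, ← Algebra.smul_def] at h
    simp only [_root_.map_mul, map_add] at h
    simpa only [chebMat, Polynomial.Chebyshev.T_one, Polynomial.aeval_X] using h
  have hcore : chebMat P k * P * chebMat P l =
      (1 / 4 : ℝ) • (chebMat P ((k : ℤ) + l + 1) + chebMat P ((k : ℤ) - l + 1)
        + chebMat P ((k : ℤ) + l - 1) + chebMat P ((k : ℤ) - l - 1)) := by
    rw [← key, smul_smul]; norm_num
  rw [chebMat_abs, chebMat_abs, chebMat_abs, Matrix.transpose_mul, hT]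
  have hmul : bᵀ * chebMat P k * P * (chebMat P l * b)
      = bᵀ * (chebMat P k * P * chebMat P l) * b := by
    simp [Matrix.mul_assoc]
  rw [hmul, hcore]
  simp [Matrix.mul_smul, Matrix.smul_mul, Matrix.mul_add, Matrix.add_mul, Matrix.mul_assoc]
end
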